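/- For every permutation p of length k with doubling number t, there exists an alternating permutation of length k + t that contains p. -/

import Mathlib

def IsAlternating {n : ℕ} (w : Equiv.Perm (Fin n)) : Prop :=
  ∀ (i : ℕ) (h : i + 1 < n),
    if i % 2 = 0 then w ⟨i, by omega⟩ < w ⟨i + 1, h⟩
    else w ⟨i + 1, h⟩ < w ⟨i, by omega⟩

def ContainsPat {n b : ℕ} (w : Equiv.Perm (Fin n)) (q : Equiv.Perm (Fin b)) : Prop :=
  ∃ f : Fin b → Fin n, StrictMono f ∧ ∀ i j : Fin b, q i < q j ↔ w (f i) < w (f j)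

/-- The `j`-th entry (1-indexed) of the permutation `w`, as a value in `1..k`,
with the convention that the 0-th entry is `k+1` (playing the role of `+∞`). -/
def entryVal {k : ℕ} (w : Equiv.Perm (Fin k)) (j : ℕ) : ℕ :=
  if j = 0 then k + 1 else if h : j - 1 < k then (w ⟨j - 1, h⟩).val + 1 else 0

/-- The doubling set `d(p) = { i ∈ [k-1] : p(i-1) > p(i) > p(i+1) or p(i-1) < p(i) < p(i+1) }`,
with `p(0) = +∞`. -/
def doublingSet {k : ℕ} (w : Equiv.Perm (Fin k)) : Finset ℕ :=
  (Finset.Ico 1 k).filter fun i =>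
    (entryVal w (i - 1) > entryVal w i ∧ entryVal w i > entryVal w (i + 1)) ∨
    (entryVal w (i - 1) < entryVal w i ∧ entryVal w i < entryVal w (i + 1))

def doublingNumber {k : ℕ} (w : Equiv.Perm (Fin k)) : ℕ := (doublingSet w).card

namespace Stmt2Aux

/-- From an injective tuple, get a permutation order-isomorphic to it. -/
lemma exists_perm_iso {n : ℕ} (g : Fin n → ℚ) (hg : Function.Injective g) :
    ∃ w : Equiv.Perm (Fin n), ∀ a b, w a < w b ↔ g a < g b := by
  set σ := Tuple.sort g with hσ
  have hmono : StrictMono (g ∘ σ) :=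
    (Tuple.monotone_sort g).strictMono_of_injective (hg.comp σ.injective)
  refine ⟨σ⁻¹, fun a b => ?_⟩
  have h1 : ∀ c, g (σ (σ⁻¹ c)) = g c := fun c => by simp
  constructor
  · intro h
    have := hmono h
    simpa [Function.comp, h1] using this
  · intro h
    by_contra hn
    push_neg at hn
    rcases lt_or_eq_of_le hn with h' | h'
    · have := hmono h'
      simp only [Function.comp, h1] at this
      exact absurd h (not_lt.2 this.le)
    · have : a = b := by
        have := congrArg σ h'
        simpa using this.symm
      subst this; exact lt_irrefl _ h

variable {k : ℕ} (p : Equiv.Perm (Fin k))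

abbrev e (j : ℕ) : ℕ := entryVal p j
abbrev d : Finset ℕ := doublingSet p

/-- value inserted after position i (for i in the doubling set) -/
def x (i : ℕ) : ℚ := if e p (i-1) > e p i then (k + 2 + i : ℚ) else -(1 + i : ℚ)

def blk (i : ℕ) : List ℚ := (e p i : ℚ) :: (if i ∈ d p then [x p i] else [])

def S (i : ℕ) : List ℚ :=
  if i ≤ k then blk p i ++ S (i + 1) else []
termination_by k + 1 - i

lemma S_eq {i : ℕ} (h : i ≤ k) : S p i = blk p i ++ S p (i+1) := by
  rw [S, if_pos h]

lemma S_eq' {i : ℕ} (h : ¬ i ≤ k) : S p i = [] := by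
  rw [S, if_neg h]

lemma e_zero : e p 0 = k + 1 := by simp [e, entryVal]

lemma e_pos {j : ℕ} (h1 : 1 ≤ j) (h2 : j ≤ k) : e p j = (p ⟨j-1, by omega⟩).val + 1 := by
  rw [e, entryVal, if_neg (by omega : ¬ j = 0), dif_pos (by omega : j - 1 < k)]

lemma e_le {j : ℕ} (h2 : j ≤ k) : e p j ≤ k + 1 := by
  rcases Nat.eq_zero_or_pos j with h | h
  · subst h; simp [e_zero]
  · rw [e_pos p h h2]; have := (p ⟨j-1, by omega⟩).isLt; omega

lemma e_le' {j : ℕ} (h1 : 1 ≤ j) (h2 : j ≤ k) : e p j ≤ k := by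
  rw [e_pos p h1 h2]; have := (p ⟨j-1, by omega⟩).isLt; omega

lemma e_ge {j : ℕ} (h2 : j ≤ k) : 1 ≤ e p j := by
  rcases Nat.eq_zero_or_pos j with h | h
  · subst h; simp [e_zero]
  · rw [e_pos p h h2]; omega

lemma e_inj {a b : ℕ} (ha : a ≤ k) (hb : b ≤ k) (h : e p a = e p b) : a = b := by
  rcases Nat.eq_zero_or_pos a with h0 | h0 <;> rcases Nat.eq_zero_or_pos b with h1 | h1
  · omega
  · exfalso; subst h0; rw [e_zero, e_pos p h1 hb] at h
    have := e_le' p h1 hb; rw [e_pos p h1 hb] at this; omega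
  · exfalso; subst h1; rw [e_zero, e_pos p h0 ha] at h
    have := (p ⟨a-1, by omega⟩).isLt; omega
  · rw [e_pos p h0 ha, e_pos p h1 hb] at h
    have := p.injective (Fin.val_injective (by omega : ((p ⟨a-1, by omega⟩) : Fin k).val = (p ⟨b-1, by omega⟩).val))
    have := congrArg Fin.val this
    simp at this
    omega

lemma mem_d {i : ℕ} : i ∈ d p ↔ 1 ≤ i ∧ i < k ∧
    ((e p (i-1) > e p i ∧ e p i > e p (i+1)) ∨ (e p (i-1) < e p i ∧ e p i < e p (i+1))) := by
  simp [d, doublingSet, Finset.mem_filter, Finset.mem_Ico, e, and_assoc]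


def Alt : Bool → List ℚ → Prop
  | _, [] => True
  | _, [_] => True
  | b, a :: c :: l => (if b then a < c else c < a) ∧ Alt (!b) (c :: l)

@[simp] lemma alt_nil (b) : Alt b [] := trivial
@[simp] lemma alt_single (b) (a : ℚ) : Alt b [a] := trivial
@[simp] lemma alt_cons_cons (b) (a c : ℚ) (l : List ℚ) :
    Alt b (a :: c :: l) ↔ (if b then a < c else c < a) ∧ Alt (!b) (c :: l) := Iff.rfl

lemma S_cons {i : ℕ} (h : i ≤ k) : ∃ tail, S p i = (e p i : ℚ) :: tail :=
  ⟨_, by rw [S_eq p h]; rfl⟩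

lemma altS : ∀ n, ∀ i, 1 ≤ i → k + 1 - i ≤ n →
    ((e p (i-1) > e p i → Alt true (S p i)) ∧ (e p (i-1) < e p i → Alt false (S p i))) := by
  intro n
  induction n with
  | zero =>
    intro i h1 h2
    rw [S_eq' p (by omega)]
    exact ⟨fun _ => trivial, fun _ => trivial⟩
  | succ n ih =>
    intro i h1 h2
    by_cases hik : i ≤ k
    · rcases eq_or_lt_of_le hik with hik' | hik'
      · -- i = k : singleton block
        have hd : i ∉ d p := fun h => by have := (mem_d p).1 h; omega
        rw [S_eq p hik, S_eq' p (by omega), blk, if_neg hd]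
        exact ⟨fun _ => trivial, fun _ => trivial⟩
      · -- i < k
        have hIH := ih (i+1) (by omega) (by omega)
        rw [show i + 1 - 1 = i from rfl] at hIH
        have hne : e p i ≠ e p (i+1) := fun h => by
          have := e_inj p (by omega) (by omega) h; omega
        obtain ⟨tail, htail⟩ := S_cons p (show i + 1 ≤ k by omega)
        rw [S_eq p hik, htail, blk]
        have heile : e p i ≤ k + 1 := e_le p (by omega)
        have hei1le : e p (i+1) ≤ k + 1 := e_le p (by omega)
        have heige : 1 ≤ e p i := e_ge p (by omega)
        have hei1ge : 1 ≤ e p (i+1) := e_ge p (by omega)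
        have hcast1 : (e p i : ℚ) ≤ k + 1 := by exact_mod_cast heile
        have hcast2 : (e p (i+1) : ℚ) ≤ k + 1 := by exact_mod_cast hei1le
        have hcast3 : (1:ℚ) ≤ e p i := by exact_mod_cast heige
        have hcast4 : (1:ℚ) ≤ e p (i+1) := by exact_mod_cast hei1ge
        have hcast5 : (0:ℚ) ≤ i := by positivity
        by_cases hd : i ∈ d p
        · rw [if_pos hd]
          rcases ((mem_d p).1 hd).2.2 with ⟨hA, hB⟩ | ⟨hA, hB⟩
          · -- double descent: insert big
            refine ⟨fun _ => ?_, fun h => absurd h (by omega)⟩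
            rw [x, if_pos hA]
            simp only [List.cons_append, List.nil_append, alt_cons_cons, Bool.not_true]
            refine ⟨?_, ?_, ?_⟩
            · simp only [if_true]; push_cast; linarith
            · simp only [Bool.false_eq_true, if_false]; push_cast; linarith
            · rw [← htail]; exact hIH.1 hB
          · -- double ascent: insert small
            refine ⟨fun h => absurd h (by omega), fun _ => ?_⟩
            rw [x, if_neg (by omega)]
            simp only [List.cons_append, List.nil_append, alt_cons_cons, Bool.not_false]
            refine ⟨?_, ?_, ?_⟩
            · simp only [Bool.false_eq_true, if_false]; push_cast; linarith
            · simp only [if_true]; push_cast; linarith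
            · rw [← htail]; exact hIH.2 hB
        · rw [if_neg hd]
          simp only [List.cons_append, List.nil_append, alt_cons_cons, Bool.not_true,
            Bool.not_false]
          have hnd := fun h => hd ((mem_d p).2 ⟨h1, hik', h⟩)
          constructor
          · intro hgt
            have hlt : e p i < e p (i+1) := by
              rcases lt_trichotomy (e p i) (e p (i+1)) with h | h | h
              · exact h
              · exact absurd h hne
              · exact absurd (Or.inl ⟨hgt, h⟩) hnd
            refine ⟨by simp only [if_true]; exact_mod_cast hlt, ?_⟩
            rw [← htail]; exact hIH.2 hlt
          · intro hlt
            have hgt : e p (i+1) < e p i := by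
              rcases lt_trichotomy (e p (i+1)) (e p i) with h | h | h
              · exact h
              · exact absurd h.symm hne
              · exact absurd (Or.inr ⟨hlt, h⟩) hnd
            refine ⟨by simp only [Bool.false_eq_true, if_false]; exact_mod_cast hgt, ?_⟩
            rw [← htail]; exact hIH.1 hgt
    · rw [S_eq' p hik]
      exact ⟨fun _ => trivial, fun _ => trivial⟩


lemma split1 (i : ℕ) :
    ((d p).filter fun a => i ≤ a).card
      = ((d p).filter fun a => i + 1 ≤ a).card + (if i ∈ d p then 1 else 0) := by
  classical
  have h1 : (d p).filter (fun a => i ≤ a)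
      = ((d p).filter fun a => i + 1 ≤ a) ∪ (d p).filter (fun a => a = i) := by
    rw [← Finset.filter_or]
    exact Finset.filter_congr fun a _ => by omega
  rw [h1, Finset.card_union_of_disjoint, Finset.filter_eq']
  · split <;> simp
  · rw [Finset.disjoint_left]
    intro a ha hb
    simp only [Finset.mem_filter] at ha hb
    omega

lemma split2 (i j : ℕ) (hij : i < j) :
    ((d p).filter fun a => i ≤ a ∧ a < j).card
      = ((d p).filter fun a => i + 1 ≤ a ∧ a < j).card + (if i ∈ d p then 1 else 0) := by
  classical
  have h1 : (d p).filter (fun a => i ≤ a ∧ a < j)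
      = ((d p).filter fun a => i + 1 ≤ a ∧ a < j) ∪ (d p).filter (fun a => a = i) := by
    rw [← Finset.filter_or]
    exact Finset.filter_congr fun a _ => by omega
  rw [h1, Finset.card_union_of_disjoint, Finset.filter_eq']
  · split <;> simp
  · rw [Finset.disjoint_left]
    intro a ha hb
    simp only [Finset.mem_filter] at ha hb
    omega

lemma blk_len (i : ℕ) : (blk p i).length = if i ∈ d p then 2 else 1 := by
  rw [blk]; split <;> simp

lemma lenS : ∀ n, ∀ i, 1 ≤ i → k + 1 - i ≤ n →
    (S p i).length = (k + 1 - i) + ((d p).filter fun a => i ≤ a).card := by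
  intro n
  induction n with
  | zero =>
    intro i h1 h2
    rw [S_eq' p (by omega)]
    have : (d p).filter (fun a => i ≤ a) = ∅ := by
      apply Finset.filter_false_of_mem
      intro a ha
      have := (mem_d p).1 ha
      omega
    simp [this]
    omega
  | succ n ih =>
    intro i h1 h2
    by_cases hik : i ≤ k
    · rw [S_eq p hik]
      rw [List.length_append, blk_len, ih (i+1) (by omega) (by omega), split1 p i]
      by_cases hd : i ∈ d p <;> simp [hd] <;> omega
    · rw [S_eq' p hik]
      have : (d p).filter (fun a => i ≤ a) = ∅ := by
        apply Finset.filter_false_of_mem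
        intro a ha
        have := (mem_d p).1 ha
        omega
      simp [this]
      omega

lemma getS : ∀ n, ∀ i j, 1 ≤ i → i ≤ j → j ≤ k → j - i ≤ n →
    (S p i)[(j - i) + ((d p).filter fun a => i ≤ a ∧ a < j).card]?
      = some (e p j : ℚ) := by
  intro n
  induction n with
  | zero =>
    intro i j h1 h2 h3 h4
    obtain rfl : j = i := by omega
    have hemp : (d p).filter (fun a => j ≤ a ∧ a < j) = ∅ :=
      Finset.filter_false_of_mem (fun a _ h => by omega)
    rw [S_eq p h3, hemp]
    simp [blk]
  | succ n ih =>
    intro i j h1 h2 h3 h4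
    rcases eq_or_lt_of_le h2 with h | hij
    · obtain rfl : j = i := h.symm
      have hemp : (d p).filter (fun a => j ≤ a ∧ a < j) = ∅ :=
        Finset.filter_false_of_mem (fun a _ h => by omega)
      rw [S_eq p h3, hemp]
      simp [blk]
    · have hsplit := split2 p i j hij
      have hc1 : i ∈ d p → 1 ≤ ((d p).filter fun a => i ≤ a ∧ a < j).card := fun hd =>
        Finset.card_pos.mpr ⟨i, Finset.mem_filter.mpr ⟨hd, le_refl _, hij⟩⟩
      rw [S_eq p (by omega : i ≤ k),
        List.getElem?_append_right (by
          rw [blk_len]; split_ifs with hd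
          · have := hc1 hd; omega
          · omega)]
      have hrec := ih (i+1) j (by omega) (by omega) h3 (by omega)
      rw [blk_len, hsplit]
      by_cases hd : i ∈ d p
      · rw [if_pos hd, if_pos hd]
        have harith : j - i + (((d p).filter fun a => i + 1 ≤ a ∧ a < j).card + 1) - 2
            = j - (i+1) + ((d p).filter fun a => i + 1 ≤ a ∧ a < j).card := by omega
        rw [harith]
        exact hrec
      · rw [if_neg hd, if_neg hd]
        have harith : j - i + (((d p).filter fun a => i + 1 ≤ a ∧ a < j).card + 0) - 1
            = j - (i+1) + ((d p).filter fun a => i + 1 ≤ a ∧ a < j).card := by omega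
        rw [harith]
        exact hrec


lemma memS : ∀ n, ∀ i, 1 ≤ i → k + 1 - i ≤ n → ∀ a ∈ S p i,
    (∃ j, i ≤ j ∧ j ≤ k ∧ a = (e p j : ℚ)) ∨
    (∃ i', i ≤ i' ∧ i' < k ∧ (a = (k : ℚ) + 2 + i' ∨ a = -(1 + (i' : ℚ)))) := by
  intro n
  induction n with
  | zero =>
    intro i h1 h2 a ha
    rw [S_eq' p (by omega)] at ha
    simp at ha
  | succ n ih =>
    intro i h1 h2 a ha
    by_cases hik : i ≤ k
    · rw [S_eq p hik, blk] at ha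
      rcases List.mem_append.1 ha with ha | ha
      · rcases List.mem_cons.1 ha with ha | ha
        · exact Or.inl ⟨i, le_refl _, hik, ha⟩
        · by_cases hd : i ∈ d p
          · rw [if_pos hd] at ha
            simp only [List.mem_singleton] at ha
            have hik' : i < k := ((mem_d p).1 hd).2.1
            refine Or.inr ⟨i, le_refl _, hik', ?_⟩
            rw [ha, x]
            split
            · left; push_cast; ring
            · right; push_cast; ring
          · rw [if_neg hd] at ha; simp at ha
      · rcases ih (i+1) (by omega) (by omega) a ha with ⟨j, hj1, hj2, hj3⟩ | ⟨i', h1', h2', h3'⟩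
        · exact Or.inl ⟨j, by omega, hj2, hj3⟩
        · exact Or.inr ⟨i', by omega, h2', h3'⟩
    · rw [S_eq' p hik] at ha
      simp at ha

lemma nodupS : ∀ n, ∀ i, 1 ≤ i → k + 1 - i ≤ n → (S p i).Nodup := by
  intro n
  induction n with
  | zero =>
    intro i h1 h2
    rw [S_eq' p (by omega)]
    exact List.nodup_nil
  | succ n ih =>
    intro i h1 h2
    by_cases hik : i ≤ k
    · rw [S_eq p hik]
      have hmem := memS p n (i+1) (by omega) (by omega)
      have hnext := ih (i+1) (by omega) (by omega)
      have heige : 1 ≤ e p i := e_ge p hik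
      have heile : e p i ≤ k + 1 := e_le p hik
      have hnotin : ∀ c : ℚ, ((1:ℚ) ≤ c) → (c ≤ k + 1) →
          (∀ j, i + 1 ≤ j → j ≤ k → c ≠ (e p j : ℚ)) → c ∉ S p (i+1) := by
        intro c hc1 hc2 hc3 hc
        rcases hmem c hc with ⟨j, hj1, hj2, hj3⟩ | ⟨i', h1', h2', h3'⟩
        · exact hc3 j hj1 hj2 hj3
        · rcases h3' with h | h
          · rw [h] at hc2; push_cast at hc2
            have : (0:ℚ) ≤ i' := by positivity
            linarith
          · rw [h] at hc1
            have : (0:ℚ) ≤ i' := by positivity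
            linarith
      rw [List.nodup_append]
      refine ⟨?_, hnext, ?_⟩
      · rw [blk]
        by_cases hd : i ∈ d p
        · rw [if_pos hd]
          refine List.nodup_cons.2 ⟨?_, List.nodup_singleton _⟩
          simp only [List.mem_singleton]
          intro hcon
          rw [x] at hcon
          have h0 : (0:ℚ) ≤ i := by positivity
          have hle : (e p i : ℚ) ≤ k + 1 := by exact_mod_cast heile
          have hge : (1:ℚ) ≤ e p i := by exact_mod_cast heige
          split at hcon <;> linarith
        · rw [if_neg hd]; exact List.nodup_singleton _
      · intro c hc
        suffices c ∉ S p (i+1) from fun b hb hcb => this (hcb ▸ hb)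
        rw [blk] at hc
        rcases List.mem_cons.1 hc with hc | hc
        · subst hc
          apply hnotin _ (by exact_mod_cast heige) (by exact_mod_cast heile)
          intro j hj1 hj2 hcon
          have : e p i = e p j := by exact_mod_cast hcon
          have := e_inj p hik hj2 this
          omega
        · by_cases hd : i ∈ d p
          · rw [if_pos hd] at hc
            simp only [List.mem_singleton] at hc
            subst hc
            intro hcon
            rcases hmem _ hcon with ⟨j, hj1, hj2, hj3⟩ | ⟨i', h1', h2', h3'⟩
            · have hle : (e p j : ℚ) ≤ k + 1 := by exact_mod_cast e_le p hj2
              have hge : (1:ℚ) ≤ e p j := by exact_mod_cast e_ge p hj2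
              have h0 : (0:ℚ) ≤ i := by positivity
              rw [x] at hj3
              split at hj3 <;> push_cast at hj3 <;> linarith
            · have h0 : (i:ℚ) < i' := by exact_mod_cast (by omega : i < i')
              have h0' : (0:ℚ) ≤ i := by positivity
              rw [x] at h3'
              split at h3' <;> rcases h3' with h | h <;> push_cast at h <;> linarith
          · rw [if_neg hd] at hc
            exact absurd hc List.not_mem_nil
    · rw [S_eq' p hik]
      exact List.nodup_nil

lemma alt_get : ∀ (l : List ℚ) (b : Bool) (m : ℕ) (h1 : m + 1 < l.length), Alt b l →
    (if (m % 2 = 0) = (b = true) then l.get ⟨m, by omega⟩ < l.get ⟨m+1, h1⟩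
     else l.get ⟨m+1, h1⟩ < l.get ⟨m, by omega⟩) := by
  intro l
  induction l with
  | nil => intro b m h1; simp at h1
  | cons a t iht =>
    intro b m h1 halt
    match t, h1 with
    | c :: t', h1 =>
      match m with
      | 0 =>
        rcases halt with ⟨hrel, _⟩
        cases b
        · rw [if_neg (by simp)]
          simpa [List.get] using hrel
        · rw [if_pos (by simp)]
          simpa [List.get] using hrel
      | Nat.succ m' =>
        rcases halt with ⟨_, halt'⟩
        have := iht (!b) m' (by simpa using h1) halt'
        have hpar : ((m' + 1) % 2 = 0) = (b = true) ↔ ((m' % 2 = 0) = ((!b) = true)) := by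
          cases b <;> rcases Nat.mod_two_eq_zero_or_one m' with h | h <;>
            simp [Nat.add_mod, h]
        simp only [List.get]
        by_cases hcase : ((m' + 1) % 2 = 0) = (b = true)
        · rw [if_pos hcase]
          rw [if_pos (hpar.1 hcase)] at this
          exact this
        · rw [if_neg hcase]
          rw [if_neg (fun hh => hcase (hpar.2 hh))] at this
          exact this


lemma e_one_lt (p : Equiv.Perm (Fin k)) : e p 1 < e p 0 := by
  rw [e_zero]
  rcases Nat.eq_zero_or_pos k with rfl | h
  · simp [e, entryVal]
  · have := e_le' p le_rfl h
    omega

end Stmt2Aux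

open Stmt2Aux in
theorem stmt2' (k : ℕ) (p : Equiv.Perm (Fin k)) :
    ∃ w : Equiv.Perm (Fin (k + doublingNumber p)), IsAlternating w ∧ ContainsPat w p := by
  classical
  set q : List ℚ := S p 1 with hq
  have hfilter : (d p).filter (fun a => 1 ≤ a) = d p :=
    Finset.filter_true_of_mem (fun a ha => ((mem_d p).1 ha).1)
  have hlen : q.length = k + doublingNumber p := by
    have := lenS p (k+1) 1 le_rfl (by omega)
    rw [hq, this, hfilter]
    simp [doublingNumber]
  have hnodup : q.Nodup := nodupS p (k+1) 1 le_rfl (by omega)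
  set g : Fin (k + doublingNumber p) → ℚ := fun m => q.get (Fin.cast hlen.symm m) with hg
  have hginj : Function.Injective g := by
    intro a b hab
    have := List.nodup_iff_injective_get.1 hnodup hab
    have := congrArg Fin.val this
    exact Fin.val_injective this
  obtain ⟨w, hw⟩ := exists_perm_iso g hginj
  have halt : Alt true q := (altS p (k+1) 1 le_rfl (by omega)).1 (e_one_lt p)
  refine ⟨w, ?_, ?_⟩
  · -- alternating
    intro i h
    have hi1 : i + 1 < q.length := by omega
    have hget := alt_get q true i hi1 halt
    have hcast : ∀ (m : ℕ) (hm : m < k + doublingNumber p),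
        g ⟨m, hm⟩ = q.get ⟨m, by omega⟩ := fun m hm => rfl
    by_cases hp2 : i % 2 = 0
    · rw [if_pos hp2]
      rw [if_pos (by simp [hp2])] at hget
      exact (hw _ _).mpr (by rw [hcast i (by omega), hcast (i+1) h]; exact hget)
    · rw [if_neg hp2]
      rw [if_neg (by simp [hp2])] at hget
      exact (hw _ _).mpr (by rw [hcast i (by omega), hcast (i+1) h]; exact hget)
  · -- contains p
    set posF : ℕ → ℕ := fun m => m + ((d p).filter fun a => 1 ≤ a ∧ a < m + 1).card with hposF
    have hget : ∀ m, m < k → q[posF m]? = some (e p (m+1) : ℚ) := by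
      intro m hm
      have := getS p (k+1) 1 (m+1) le_rfl (by omega) (by omega) (by omega)
      simpa [hposF] using this
    have hbound : ∀ m, m < k → posF m < k + doublingNumber p := by
      intro m hm
      have h1 := hget m hm
      obtain ⟨hlt, -⟩ := List.getElem?_eq_some_iff.1 h1
      rw [hlen] at hlt
      exact hlt
    set f : Fin k → Fin (k + doublingNumber p) :=
      fun j => ⟨posF j.val, hbound j.val j.isLt⟩ with hf
    have hfval : ∀ (j : Fin k), g (f j) = (e p (j.val + 1) : ℚ) := by
      intro j
      have h1 := hget j.val j.isLt
      have h2 := List.getElem?_eq_some_iff.1 h1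
      obtain ⟨hlt, hgeteq⟩ := h2
      rw [hg]
      simp only
      rw [← hgeteq]
      congr 1
    refine ⟨f, ?_, ?_⟩
    · intro a b hab
      have hab' : a.val < b.val := hab
      have hsub : ((d p).filter fun x => 1 ≤ x ∧ x < a.val + 1)
          ⊆ ((d p).filter fun x => 1 ≤ x ∧ x < b.val + 1) := by
        intro x hx
        simp only [Finset.mem_filter] at hx ⊢
        exact ⟨hx.1, hx.2.1, by omega⟩
      have := Finset.card_le_card hsub
      show posF a.val < posF b.val
      simp only [hposF]
      omega
    · intro i0 j0
      have h1 : p i0 < p j0 ↔ e p (i0.val + 1) < e p (j0.val + 1) := by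
        rw [e_pos p (by omega) (by omega : i0.val + 1 ≤ k),
          e_pos p (by omega) (by omega : j0.val + 1 ≤ k)]
        simp only [Nat.add_sub_cancel, Fin.eta]
        rw [Fin.lt_def]
        omega
      rw [h1, hw]
      rw [hfval i0, hfval j0]
      exact_mod_cast Iff.rfl

theorem stmt2 (k : ℕ) (p : Equiv.Perm (Fin k)) :
    ∃ w : Equiv.Perm (Fin (k + doublingNumber p)), IsAlternating w ∧ ContainsPat w p :=
  stmt2' k p
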